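/- For every 1-VASS (Q,T) and states q₀, q° ∈ Q there exist bounds B₁, B₂, B₃ ∈ ℕ such that for every x° ∈ ℕ with x° ≥ B₁, the configuration (x°,q°) is box-reachable from (0,q₀) if and only if there exist a linear path scheme αβ*γ with |α|,|β|,|γ| ≤ B₂ whose paths start at q₀, a path θ that closes αβ*γ and ends at q° with |θ| ≤ B₃, and k ∈ ℕ, such that αβᵏγθ is an ℕ-path from (0,q₀) to (x°,q°). -/

import Mathlib

/-- `IsPathFrom T q l q'`: the list of transitions `l` forms a path of the 1-VASS
with transition set `T` starting at state `q` and ending at state `q'`. -/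
def IsPathFrom {Q : Type*} (T : Finset (Q × ℤ × Q)) : Q → List (Q × ℤ × Q) → Q → Prop
  | q, [], q' => q = q'
  | q, t :: ts, q' => t ∈ T ∧ t.1 = q ∧ IsPathFrom T t.2.2 ts q'

/-- The effect of a list of transitions: the sum of the counter updates. -/
def effL {Q : Type*} (l : List (Q × ℤ × Q)) : ℤ :=
  (l.map fun t => t.2.1).sum

/-- The peak of a list of transitions: the maximum prefix-sum
(the empty prefix counts, with sum `0`). -/
def peakL {Q : Type*} (l : List (Q × ℤ × Q)) : ℤ :=
  Finset.sup' (Finset.range (l.length + 1))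
    (Finset.nonempty_range_iff.mpr (Nat.succ_ne_zero _))
    (fun j => effL (l.take j))

/-- The drop of a list of transitions: the absolute value of the minimum prefix-sum. -/
def dropL {Q : Type*} (l : List (Q × ℤ × Q)) : ℤ :=
  |Finset.inf' (Finset.range (l.length + 1))
      (Finset.nonempty_range_iff.mpr (Nat.succ_ne_zero _))
      (fun j => effL (l.take j))|

/-- `(x°, q°)` is box-reachable from `(0, q₀)`: there is an ℕ-path from `(0,q₀)`
to `(x°,q°)` all of whose prefix sums lie in `[0, x°]`. -/
def BoxReachConfig {Q : Type*} (T : Finset (Q × ℤ × Q)) (q₀ : Q) (x : ℤ) (qf : Q) : Prop :=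
  ∃ l : List (Q × ℤ × Q), IsPathFrom T q₀ l qf ∧ effL l = x ∧
    ∀ j : ℕ, 0 ≤ effL (l.take j) ∧ effL (l.take j) ≤ x

section Helpers
variable {Q : Type*} {T : Finset (Q × ℤ × Q)}

@[simp] lemma effL_nil : effL ([] : List (Q × ℤ × Q)) = 0 := rfl

@[simp] lemma effL_cons (t : Q × ℤ × Q) (l : List (Q × ℤ × Q)) :
    effL (t :: l) = t.2.1 + effL l := by simp [effL]

@[simp] lemma effL_append (u v : List (Q × ℤ × Q)) : effL (u ++ v) = effL u + effL v := by
  simp [effL]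

lemma effL_take_append (u v : List (Q × ℤ × Q)) (j : ℕ) :
    effL ((u ++ v).take j) = effL (u.take j) + effL (v.take (j - u.length)) := by
  rw [List.take_append, effL_append]

lemma effL_take_add (l : List (Q × ℤ × Q)) (m v : ℕ) :
    effL (l.take (m + v)) = effL (l.take m) + effL ((l.drop m).take v) := by
  rw [List.take_add, effL_append]

lemma effL_drop (l : List (Q × ℤ × Q)) (m : ℕ) :
    effL (l.drop m) = effL l - effL (l.take m) := by
  have := effL_append (l.take m) (l.drop m)
  rw [List.take_append_drop] at this
  omega

lemma effL_take_of_le (l : List (Q × ℤ × Q)) {j : ℕ} (h : l.length ≤ j) :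
    effL (l.take j) = effL l := by rw [List.take_of_length_le h]

/-- end state of a path -/
def endState {Q : Type*} (q : Q) : List (Q × ℤ × Q) → Q
  | [] => q
  | t :: ts => endState t.2.2 ts

lemma IsPathFrom.endState_eq {a b : Q} : ∀ {l}, IsPathFrom T a l b → endState a l = b := by
  intro l
  induction l generalizing a with
  | nil => intro h; exact h
  | cons t ts ih => intro h; exact ih h.2.2

lemma isPathFrom_append {a c b : Q} {u v : List (Q × ℤ × Q)}
    (hu : IsPathFrom T a u c) (hv : IsPathFrom T c v b) : IsPathFrom T a (u ++ v) b := by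
  induction u generalizing a with
  | nil =>
    have : a = c := hu
    simpa [this] using hv
  | cons t ts ih => exact ⟨hu.1, hu.2.1, ih hu.2.2⟩

lemma isPathFrom_split {a b : Q} {l : List (Q × ℤ × Q)} (h : IsPathFrom T a l b) (m : ℕ) :
    IsPathFrom T a (l.take m) (endState a (l.take m)) ∧
      IsPathFrom T (endState a (l.take m)) (l.drop m) b := by
  induction l generalizing a m with
  | nil => simp [IsPathFrom, endState]; exact h
  | cons t ts ih =>
    cases m with
    | zero => exact ⟨rfl, h⟩
    | succ m =>
      obtain ⟨h1, h2⟩ := ih h.2.2 m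
      exact ⟨⟨h.1, h.2.1, h1⟩, h2⟩

lemma mem_T_of_isPathFrom {a b : Q} {l : List (Q × ℤ × Q)} (h : IsPathFrom T a l b) :
    ∀ t ∈ l, t ∈ T := by
  induction l generalizing a with
  | nil => simp
  | cons s ts ih =>
    intro t ht
    rcases List.mem_cons.1 ht with rfl | ht
    · exact h.1
    · exact ih h.2.2 t ht

lemma abs_effL_le {M : ℕ} (hM : ∀ t ∈ T, |t.2.1| ≤ (M:ℤ)) {a b : Q} {l : List (Q × ℤ × Q)}
    (h : IsPathFrom T a l b) : |effL l| ≤ (l.length : ℤ) * M := by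
  induction l generalizing a with
  | nil => simp
  | cons t ts ih =>
    have h1 := hM t h.1
    have h2 := ih h.2.2
    have := abs_add_le t.2.1 (effL ts)
    simp only [effL_cons, List.length_cons]
    push_cast
    nlinarith [abs_nonneg (effL ts)]

lemma effL_take_abs_le {M : ℕ} (hM : ∀ t ∈ T, |t.2.1| ≤ (M:ℤ)) {a b : Q}
    {l : List (Q × ℤ × Q)} (h : IsPathFrom T a l b) (j : ℕ) :
    |effL (l.take j)| ≤ (l.length : ℤ) * M := by
  have h1 := (isPathFrom_split h j).1
  have := abs_effL_le hM h1
  have h2 : ((l.take j).length : ℤ) * M ≤ (l.length : ℤ) * M := by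
    have : (l.take j).length ≤ l.length := (List.length_take (i := j) (l := l)) ▸ min_le_right _ _
    exact mul_le_mul_of_nonneg_right (by exact_mod_cast this) (by positivity)
  linarith

lemma effL_take_succ_le {M : ℕ} (hM : ∀ t ∈ T, |t.2.1| ≤ (M:ℤ)) {a b : Q}
    {l : List (Q × ℤ × Q)} (h : IsPathFrom T a l b) (j : ℕ) :
    effL (l.take (j+1)) ≤ effL (l.take j) + M := by
  rw [effL_take_add l j 1]
  have : |effL ((l.drop j).take 1)| ≤ (M:ℤ) := by
    have hp := (isPathFrom_split (isPathFrom_split h j).2 1).1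
    have := abs_effL_le hM hp
    have hlen : (((l.drop j).take 1).length : ℤ) ≤ 1 := by
      have := (List.length_take (i := 1) (l := l.drop j)) ▸ min_le_left 1 (l.drop j).length
      exact_mod_cast this
    nlinarith [abs_nonneg (effL ((l.drop j).take 1))]
  have := abs_le.1 this
  linarith

end Helpers
section PeakDrop
variable {Q : Type*} {T : Finset (Q × ℤ × Q)}

lemma effL_take_le_peakL (l : List (Q × ℤ × Q)) (j : ℕ) : effL (l.take j) ≤ peakL l := by
  unfold peakL
  rcases le_or_gt j l.length with h | h
  · exact Finset.le_sup' (fun j => effL (l.take j)) (Finset.mem_range.2 (Nat.lt_succ_of_le h))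
  · rw [effL_take_of_le l h.le, ← effL_take_of_le l (le_refl l.length)]
    exact Finset.le_sup' (fun j => effL (l.take j)) (Finset.mem_range.2 (Nat.lt_succ_self _))

lemma peakL_le {l : List (Q × ℤ × Q)} {c : ℤ} (h : ∀ j, effL (l.take j) ≤ c) : peakL l ≤ c :=
  Finset.sup'_le _ _ fun j _ => h j

lemma effL_le_peakL (l : List (Q × ℤ × Q)) : effL l ≤ peakL l := by
  have := effL_take_le_peakL l l.length
  rwa [effL_take_of_le l (le_refl _)] at this

lemma peakL_nonneg (l : List (Q × ℤ × Q)) : 0 ≤ peakL l := by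
  simpa using effL_take_le_peakL l 0

lemma dropL_eq_zero {l : List (Q × ℤ × Q)} (h : ∀ j, 0 ≤ effL (l.take j)) : dropL l = 0 := by
  have h1 : Finset.inf' (Finset.range (l.length + 1))
      (Finset.nonempty_range_iff.mpr (Nat.succ_ne_zero _)) (fun j => effL (l.take j)) = 0 := by
    apply le_antisymm
    · have := Finset.inf'_le (fun j => effL (l.take j)) (Finset.mem_range.2 (Nat.succ_pos l.length))
      exact this.trans (by simp)
    · exact Finset.le_inf' _ _ fun j _ => h j
  rw [dropL, h1, abs_zero]

lemma nonneg_of_dropL_eq_zero {l : List (Q × ℤ × Q)} (h : dropL l = 0) (j : ℕ) :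
    0 ≤ effL (l.take j) := by
  have hinf : Finset.inf' (Finset.range (l.length + 1))
      (Finset.nonempty_range_iff.mpr (Nat.succ_ne_zero _)) (fun j => effL (l.take j)) = 0 := by
    have := abs_eq_zero.1 h
    exact this
  rcases le_or_gt j l.length with hj | hj
  · have := Finset.inf'_le (fun j => effL (l.take j)) (Finset.mem_range.2 (by omega : j < l.length + 1))
    rw [hinf] at this; exact this
  · rw [effL_take_of_le l hj.le]
    have := Finset.inf'_le (fun j => effL (l.take j)) (Finset.mem_range.2 (Nat.lt_succ_self l.length))
    rw [hinf] at this; simpa [effL_take_of_le l (le_refl l.length)] using this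

lemma peakL_eq_effL {l : List (Q × ℤ × Q)} (h : ∀ j, effL (l.take j) ≤ effL l) :
    peakL l = effL l :=
  le_antisymm (peakL_le h) (effL_le_peakL l)

/-- all prefix sums starting from `h` are nonnegative -/
def OkFrom {Q : Type*} (h : ℤ) (l : List (Q × ℤ × Q)) : Prop :=
  ∀ j, 0 ≤ h + effL (l.take j)

/-- all prefix sums starting from `h` are at most `c` -/
def BdFrom {Q : Type*} (h c : ℤ) (l : List (Q × ℤ × Q)) : Prop :=
  ∀ j, h + effL (l.take j) ≤ c

lemma okFrom_append {h : ℤ} {u v : List (Q × ℤ × Q)} (hu : OkFrom h u)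
    (hv : OkFrom (h + effL u) v) : OkFrom h (u ++ v) := by
  intro j
  rw [effL_take_append]
  rcases le_or_gt j u.length with hj | hj
  · have : v.take (j - u.length) = [] := by
      have : j - u.length = 0 := by omega
      simp [this]
    rw [this]; simpa using hu j
  · rw [effL_take_of_le u hj.le]
    have := hv (j - u.length)
    linarith

lemma bdFrom_append {h c : ℤ} {u v : List (Q × ℤ × Q)} (hu : BdFrom h c u)
    (hv : BdFrom (h + effL u) c v) : BdFrom h c (u ++ v) := by
  intro j
  rw [effL_take_append]
  rcases le_or_gt j u.length with hj | hj
  · have : j - u.length = 0 := by omega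
    rw [this]; simpa using hu j
  · rw [effL_take_of_le u hj.le]
    have := hv (j - u.length)
    linarith

lemma effL_flatten_replicate (k : ℕ) (β : List (Q × ℤ × Q)) :
    effL (List.replicate k β).flatten = k * effL β := by
  induction k with
  | zero => simp
  | succ k ih => rw [List.replicate_succ, List.flatten_cons, effL_append, ih]; push_cast; ring

lemma isPathFrom_flatten_replicate {q : Q} {β : List (Q × ℤ × Q)}
    (hβ : IsPathFrom T q β q) (k : ℕ) : IsPathFrom T q (List.replicate k β).flatten q := by
  induction k with
  | zero => exact rfl
  | succ k ih => rw [List.replicate_succ, List.flatten_cons]; exact isPathFrom_append hβ ih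

lemma okFrom_flatten_replicate {h : ℤ} {β : List (Q × ℤ × Q)} {k : ℕ} (h0 : 0 ≤ h)
    (H : ∀ a : ℕ, a < k → OkFrom (h + a * effL β) β) :
    OkFrom h (List.replicate k β).flatten := by
  induction k generalizing h with
  | zero => intro j; simpa using h0
  | succ k ih =>
    rw [List.replicate_succ, List.flatten_cons]
    apply okFrom_append
    · simpa using H 0 (Nat.succ_pos k)
    · apply ih
      · have := H 0 (Nat.succ_pos k) β.length
        rw [effL_take_of_le β (le_refl _)] at this
        simpa using this
      intro a ha
      have := H (a + 1) (by omega)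
      convert this using 1
      push_cast; ring

lemma bdFrom_flatten_replicate {h c : ℤ} {β : List (Q × ℤ × Q)} {k : ℕ} (h0 : h ≤ c)
    (H : ∀ a : ℕ, a < k → BdFrom (h + a * effL β) c β) :
    BdFrom h c (List.replicate k β).flatten := by
  induction k generalizing h with
  | zero => intro j; simpa using h0
  | succ k ih =>
    rw [List.replicate_succ, List.flatten_cons]
    apply bdFrom_append
    · simpa using H 0 (Nat.succ_pos k)
    · apply ih
      · have := H 0 (Nat.succ_pos k) β.length
        rw [effL_take_of_le β (le_refl _)] at this
        simpa using this
      intro a ha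
      have := H (a + 1) (by omega)
      convert this using 1
      push_cast; ring

end PeakDrop

section Cut
variable {Q : Type*} {T : Finset (Q × ℤ × Q)}

lemma cut_step {a b : Q} {l : List (Q × ℤ × Q)} (h : IsPathFrom T a l b) {i j : ℕ}
    (hij : i < j) (hjl : j ≤ l.length)
    (hstate : endState a (l.take i) = endState a (l.take j)) :
    IsPathFrom T a (l.take i ++ l.drop j) b ∧
    effL (l.take i ++ l.drop j) = effL l - (effL (l.take j) - effL (l.take i)) ∧
    (l.take i ++ l.drop j).length + 1 ≤ l.length ∧
    ∀ u, effL ((l.take i ++ l.drop j).take u) =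
      effL (l.take (min u i)) + (effL (l.take (j + (u - i))) - effL (l.take j)) := by
  have hi := (isPathFrom_split h i).1
  have hj2 := (isPathFrom_split h j).2
  rw [← hstate] at hj2
  refine ⟨isPathFrom_append hi hj2, ?_, ?_, ?_⟩
  · rw [effL_append, effL_drop]; ring
  · rw [List.length_append, List.length_take, List.length_drop]
    omega
  · intro u
    rw [effL_take_append, List.take_take, List.length_take]
    have hmin : min i l.length = i := by omega
    rw [hmin]
    congr 1
    have := effL_take_add l j (u - i)
    omega

lemma cut1 [Fintype Q] (S : Finset ℤ) :
    ∀ (N : ℕ) (l : List (Q × ℤ × Q)) (a b : Q), l.length ≤ N → IsPathFrom T a l b →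
      (∀ j, effL (l.take j) ∈ S) →
      ∃ l', IsPathFrom T a l' b ∧ effL l' = effL l ∧ (∀ j, effL (l'.take j) ∈ S) ∧
        l'.length ≤ Fintype.card Q * S.card := by
  classical
  intro N
  induction N with
  | zero =>
    intro l a b hlen hpath hS
    exact ⟨l, hpath, rfl, hS, by omega⟩
  | succ N ih =>
    intro l a b hlen hpath hS
    by_cases hle : l.length ≤ Fintype.card Q * S.card
    · exact ⟨l, hpath, rfl, hS, hle⟩
    · push_neg at hle
      have hcard : (Finset.univ : Finset (Q × {x // x ∈ S})).card < (Finset.range (l.length + 1)).card := by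
        rw [Finset.card_range, Finset.card_univ, Fintype.card_prod, Fintype.card_coe]
        omega
      obtain ⟨i, hi, j, hj, hne, heq⟩ :=
        Finset.exists_ne_map_eq_of_card_lt_of_maps_to hcard
          (f := fun u => (endState a (l.take u), (⟨effL (l.take u), hS u⟩ : {x // x ∈ S})))
          (fun u _ => Finset.mem_univ _)
      -- wlog i < j
      wlog hij : i < j generalizing i j
      · exact this j hj i hi hne.symm heq.symm (by omega)
      have hjl : j ≤ l.length := by
        have := Finset.mem_range.1 hj; omega
      have hstate : endState a (l.take i) = endState a (l.take j) := congrArg Prod.fst heq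
      have hval : effL (l.take i) = effL (l.take j) := by
        have := congrArg Prod.snd heq
        exact Subtype.ext_iff.1 this
      obtain ⟨hpath', heff', hlen', hpre'⟩ := cut_step hpath hij hjl hstate
      set l'' := l.take i ++ l.drop j with hl''
      have heff'' : effL l'' = effL l := by rw [heff', hval]; ring
      have hS'' : ∀ u, effL (l''.take u) ∈ S := by
        intro u
        rw [hpre' u]
        rcases le_or_gt u i with hui | hui
        · have h1 : min u i = u := by omega
          have h2 : u - i = 0 := by omega
          rw [h1, h2]
          simpa using hS u
        · have h1 : min u i = i := by omega
          rw [h1, hval]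
          have : effL (l.take j) + (effL (l.take (j + (u - i))) - effL (l.take j)) =
              effL (l.take (j + (u - i))) := by ring
          rw [this]
          exact hS _
      obtain ⟨l', h1, h2, h3, h4⟩ := ih l'' a b (by omega) hpath' hS''
      exact ⟨l', h1, by rw [h2, heff''], h3, h4⟩

lemma cut2 [Fintype Q] (E : ℕ) (hE : E ≠ 0) :
    ∀ (N : ℕ) (l : List (Q × ℤ × Q)) (a b : Q), l.length ≤ N → IsPathFrom T a l b →
      ∃ l', IsPathFrom T a l' b ∧ effL l' ≡ effL l [ZMOD (E:ℤ)] ∧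
        l'.length ≤ Fintype.card Q * E := by
  classical
  haveI : NeZero E := ⟨hE⟩
  intro N
  induction N with
  | zero =>
    intro l a b hlen hpath
    exact ⟨l, hpath, Int.ModEq.refl _, by omega⟩
  | succ N ih =>
    intro l a b hlen hpath
    by_cases hle : l.length ≤ Fintype.card Q * E
    · exact ⟨l, hpath, Int.ModEq.refl _, hle⟩
    · push_neg at hle
      have hcard : (Finset.univ : Finset (Q × ZMod E)).card < (Finset.range (l.length + 1)).card := by
        rw [Finset.card_range, Finset.card_univ, Fintype.card_prod, ZMod.card]
        omega
      obtain ⟨i, hi, j, hj, hne, heq⟩ :=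
        Finset.exists_ne_map_eq_of_card_lt_of_maps_to hcard
          (f := fun u => (endState a (l.take u), ((effL (l.take u) : ZMod E))))
          (fun u _ => Finset.mem_univ _)
      wlog hij : i < j generalizing i j
      · exact this j hj i hi hne.symm heq.symm (by omega)
      have hjl : j ≤ l.length := by
        have := Finset.mem_range.1 hj; omega
      have hstate : endState a (l.take i) = endState a (l.take j) := congrArg Prod.fst heq
      have hval : effL (l.take i) ≡ effL (l.take j) [ZMOD (E:ℤ)] := by
        have := congrArg Prod.snd heq
        exact (ZMod.intCast_eq_intCast_iff' _ _ _).1 this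
      obtain ⟨hpath', heff', hlen', _⟩ := cut_step hpath hij hjl hstate
      obtain ⟨l', h1, h2, h3⟩ := ih (l.take i ++ l.drop j) a b (by omega) hpath'
      refine ⟨l', h1, ?_, h3⟩
      calc effL l' ≡ effL (l.take i ++ l.drop j) [ZMOD (E:ℤ)] := h2
        _ = effL l - (effL (l.take j) - effL (l.take i)) := heff'
        _ ≡ effL l - (effL (l.take j) - effL (l.take j)) [ZMOD (E:ℤ)] :=
            Int.ModEq.sub (Int.ModEq.refl _) (Int.ModEq.sub (Int.ModEq.refl _) hval)
        _ = effL l := by ring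

end Cut

section More
variable {Q : Type*} {T : Finset (Q × ℤ × Q)}

lemma endState_append (q : Q) (u v : List (Q × ℤ × Q)) :
    endState q (u ++ v) = endState (endState q u) v := by
  induction u generalizing q with
  | nil => rfl
  | cons t ts ih => exact ih t.2.2

lemma length_flatten_replicate (k : ℕ) (β : List (Q × ℤ × Q)) :
    ((List.replicate k β).flatten).length = k * β.length := by
  induction k with
  | zero => simp
  | succ k ih => rw [List.replicate_succ, List.flatten_cons, List.length_append, ih]; ring

lemma isPathFrom_slice {a b : Q} {l : List (Q × ℤ × Q)} (h : IsPathFrom T a l b)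
    {i j : ℕ} (hij : i ≤ j) :
    IsPathFrom T (endState a (l.take i)) ((l.drop i).take (j - i)) (endState a (l.take j)) := by
  have h2 := (isPathFrom_split h i).2
  have h3 := (isPathFrom_split h2 (j - i)).1
  have hkey : l.take j = l.take i ++ (l.drop i).take (j - i) := by
    rw [← List.take_add]
    congr 1
    omega
  have : endState a (l.take j) = endState (endState a (l.take i)) ((l.drop i).take (j - i)) := by
    rw [hkey, endState_append]
  rw [this]
  exact h3

lemma effL_slice (l : List (Q × ℤ × Q)) {i j : ℕ} (hij : i ≤ j) :
    effL ((l.drop i).take (j - i)) = effL (l.take j) - effL (l.take i) := by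
  have := effL_take_add l i (j - i)
  have hij' : i + (j - i) = j := by omega
  rw [hij'] at this
  omega

lemma effL_slice_take (l : List (Q × ℤ × Q)) (i w v : ℕ) :
    effL (((l.drop i).take w).take v) = effL (l.take (i + min v w)) - effL (l.take i) := by
  rw [List.take_take]
  have := effL_take_add l i (min v w)
  omega

end More
section Main
variable {Q : Type*} [Fintype Q] {T : Finset (Q × ℤ × Q)}

set_option maxHeartbeats 2000000 in
lemma forward_aux {q₀ qf : Q} {M : ℕ} (hMbd : ∀ t ∈ T, |t.2.1| ≤ (M:ℤ)) (hM1 : 1 ≤ M)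
    {B2 B3 : ℕ} (x : ℤ)
    (hB2 : Fintype.card Q * ((Fintype.card Q + 1) * M + 1)
        + ((2 * ((Fintype.card Q + 1) * M) + 2 * (Fintype.card Q * ((Fintype.card Q + 1) * M) * M) + 1) + 1)
          * (Fintype.card Q * (2 * ((Fintype.card Q + 1) * M) + 1))
        + Fintype.card Q * ((Fintype.card Q + 1) * M) + 1 ≤ B2)
    (hB3 : Fintype.card Q * (((Fintype.card Q + 1) * M) + 2 * (Fintype.card Q * ((Fintype.card Q + 1) * M) * M) + M + 1) + 1 ≤ B3)
    (hx : ((((Fintype.card Q + 1) * M) + 2 * (Fintype.card Q * ((Fintype.card Q + 1) * M) * M) + M + 1)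
        + ((Fintype.card Q + 1) * M)
        + (Fintype.card Q * ((Fintype.card Q + 1) * M) * M)
        + (2 * ((Fintype.card Q + 1) * M) + 2 * (Fintype.card Q * ((Fintype.card Q + 1) * M) * M) + 1) * ((Fintype.card Q + 1) * M)
        + 2 * (Fintype.card Q * ((Fintype.card Q + 1) * M) * M) + 10 : ℕ)
        ≤ x)
    (hbr : BoxReachConfig T q₀ x qf) :
    ∃ (q₁ q₂ : Q) (α β γ θ : List (Q × ℤ × Q)) (k : ℕ),
      IsPathFrom T q₀ α q₁ ∧ IsPathFrom T q₁ β q₁ ∧ IsPathFrom T q₁ γ q₂ ∧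
      α.length ≤ B2 ∧ β.length ≤ B2 ∧ γ.length ≤ B2 ∧
      IsPathFrom T q₂ θ qf ∧ θ.length ≤ B3 ∧
      dropL θ = 0 ∧ peakL θ = effL θ ∧
      max (peakL γ - effL γ) ((peakL β - effL β) - effL γ) ≤ effL θ ∧
      effL (α ++ (List.replicate k β).flatten ++ γ ++ θ) = x ∧
      (∀ j : ℕ, 0 ≤ effL ((α ++ (List.replicate k β).flatten ++ γ ++ θ).take j)) := by
  classical
  set n := Fintype.card Q with hn
  set Pi := (n + 1) * M with hPidef
  set Lmid := n * Pi with hLmiddef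
  set P := Lmid * M with hPdef
  set c := 2 * Pi + 2 * P + 1 with hcdef
  set W0 := Pi + 2 * P + M + 1 with hW0def
  obtain ⟨l, hl, heff, hbox⟩ := hbr
  set s : ℕ → ℤ := fun u => effL (l.take u) with hsdef
  have hs0 : s 0 = 0 := by simp [hsdef]
  have hsend : ∀ u, l.length ≤ u → s u = x := by
    intro u hu
    show effL (l.take u) = x
    rw [effL_take_of_le l hu]; exact heff
  have hslo : ∀ u, 0 ≤ s u := fun u => (hbox u).1
  have hshi : ∀ u, s u ≤ x := fun u => (hbox u).2
  have hstep : ∀ u, s (u + 1) ≤ s u + M := fun u => effL_take_succ_le hMbd hl u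
  have hxW : (W0 : ℤ) + Pi + P + c * Pi + 2 * P + 10 ≤ x := by
    push_cast at hx ⊢
    push_cast [hW0def, hPidef, hPdef, hLmiddef, hcdef] at hx ⊢
    linarith
  -- records
  have hxnM : ((n:ℤ)) * M < x := by
    push_cast [hW0def, hPidef, hPdef, hLmiddef, hcdef] at hxW
    nlinarith [show (0:ℤ) ≤ n by positivity, show (1:ℤ) ≤ M by exact_mod_cast hM1,
      show (0:ℤ) ≤ (n:ℤ) * ((n+1)*M) * M by positivity,
      show (0:ℤ) ≤ (n:ℤ) * M by positivity]
  have hwit : ∀ a : ℕ, a ≤ n → ((a : ℤ) * M < s l.length) := by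
    intro a ha
    rw [hsend l.length le_rfl]
    have h1 : ((a:ℤ) * M) ≤ (n:ℤ) * M := by
      have : (a:ℤ) ≤ n := by exact_mod_cast ha
      nlinarith [show (0:ℤ) ≤ M by positivity]
    linarith
  have hex : ∀ a : ℕ, a ≤ n → ∃ t, ((a : ℤ) * M < s t) := by
    intro a ha
    exact ⟨l.length, hwit a ha⟩
  obtain ⟨f, hfspec⟩ : ∃ f : ℕ → ℕ, ∀ a : ℕ, a ≤ n → ((a:ℤ) * M < s (f a)) ∧
      (∀ u < f a, s u ≤ (a:ℤ) * M) ∧ f a ≤ l.length := by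
    refine ⟨fun a => if h : ∃ t, ((a : ℤ) * M < s t) then Nat.find h else 0, ?_⟩
    intro a ha
    have h := hex a ha
    simp only [dif_pos h]
    exact ⟨Nat.find_spec h, fun u hu => not_lt.1 (Nat.find_min h hu),
      Nat.find_le (hwit a ha)⟩

  -- pigeonhole on record states
  have hcard : (Finset.univ : Finset Q).card < (Finset.range (n+1)).card := by
    rw [Finset.card_range, Finset.card_univ, ← hn]; omega
  obtain ⟨a, ha, b, hb, hne, hgeq⟩ := Finset.exists_ne_map_eq_of_card_lt_of_maps_to hcard
    (f := fun a => endState q₀ (l.take (f a))) (fun u _ => Finset.mem_univ _)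
  wlog hab : a < b generalizing a b
  · exact this b hb a ha hne.symm hgeq.symm (by omega)
  have ha' : a ≤ n := by have := Finset.mem_range.1 ha; omega
  have hb' : b ≤ n := by have := Finset.mem_range.1 hb; omega
  obtain ⟨hra1, hra2, hra3⟩ := hfspec a ha'
  obtain ⟨hrb1, hrb2, hrb3⟩ := hfspec b hb'
  set i := f a with hidef
  set j := f b with hjdef
  have hMz : (1:ℤ) ≤ (M:ℤ) := by exact_mod_cast hM1
  have habM : (a:ℤ) * M + M ≤ (b:ℤ) * M := by
    have : (a:ℤ) + 1 ≤ b := by exact_mod_cast hab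
    nlinarith
  have hsiub : s i ≤ (a:ℤ) * M + M := by
    rcases Nat.eq_zero_or_pos i with h0 | h0
    · rw [h0, hs0]; positivity
    · have h1 := hra2 (i-1) (by omega)
      have h2 := hstep (i-1)
      have h3 : i - 1 + 1 = i := by omega
      rw [h3] at h2
      linarith
  have hsjub : s j ≤ (b:ℤ) * M + M := by
    rcases Nat.eq_zero_or_pos j with h0 | h0
    · rw [h0, hs0]; positivity
    · have h1 := hrb2 (j-1) (by omega)
      have h2 := hstep (j-1)
      have h3 : j - 1 + 1 = j := by omega
      rw [h3] at h2
      linarith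
  have hij : i < j := by
    have hile : i ≤ j := by
      by_contra hgt
      push_neg at hgt
      have h1 := hra2 j (by omega)
      have h2 : (a:ℤ) * M ≤ (b:ℤ) * M := by
        have : (a:ℤ) ≤ b := by exact_mod_cast hab.le
        nlinarith
      linarith [hrb1]
    have hne' : i ≠ j := by
      intro h
      rw [← h] at hrb1
      linarith [hrb1]
    omega
  have hnM : ((n:ℤ)) * M + M = ((Pi:ℕ) : ℤ) := by
    push_cast [hPidef]; ring
  have hsj_ub : s j ≤ ((Pi:ℕ):ℤ) := by
    have : (b:ℤ) * M ≤ (n:ℤ) * M := by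
      have : (b:ℤ) ≤ n := by exact_mod_cast hb'
      nlinarith
    linarith
  have hall : ∀ u, u ≤ j → s u ≤ ((Pi:ℕ):ℤ) := by
    intro u hu
    rcases eq_or_lt_of_le hu with h | h
    · rw [h]; exact hsj_ub
    · have h1 := hrb2 u h
      have : (b:ℤ) * M ≤ (n:ℤ) * M := by
        have : (b:ℤ) ≤ n := by exact_mod_cast hb'
        nlinarith
      linarith
  have hsi_ub : s i ≤ ((Pi:ℕ):ℤ) := hall i hij.le
  set q₁ := endState q₀ (l.take i) with hq1def
  have hq1j : endState q₀ (l.take j) = q₁ := hgeq.symm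
  set E : ℤ := s j - s i with hEdef
  have hE1 : 1 ≤ E := by
    have : s i ≤ (b:ℤ) * M := by linarith
    have := hrb1
    simp only [hEdef]
    linarith
  have hEPi : E ≤ ((Pi:ℕ):ℤ) := by
    have := hslo i
    simp only [hEdef]
    linarith

  -- construct α
  have hIccPi : (Finset.Icc (0:ℤ) ((Pi:ℕ):ℤ)).card = Pi + 1 := by
    rw [Int.card_Icc]; omega
  have hαpre : ∀ u, effL ((l.take i).take u) ∈ Finset.Icc (0:ℤ) ((Pi:ℕ):ℤ) := by
    intro u
    rw [List.take_take]
    exact Finset.mem_Icc.2 ⟨hslo _, hall _ (by omega)⟩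
  obtain ⟨α, hα, hαeff, hαpre', hαlen⟩ := cut1 (T := T) (Finset.Icc (0:ℤ) ((Pi:ℕ):ℤ))
    (l.take i).length (l.take i) q₀ q₁ le_rfl (isPathFrom_split hl i).1 hαpre
  rw [hIccPi] at hαlen
  have hαeff' : effL α = s i := hαeff
  -- construct β
  have hslice : IsPathFrom T q₁ ((l.drop i).take (j - i)) q₁ := by
    have h := isPathFrom_slice hl hij.le
    rw [hq1j] at h
    exact h
  have hβpre : ∀ v, effL (((l.drop i).take (j-i)).take v) ∈ Finset.Icc (-(s i)) ((Pi:ℕ):ℤ) := by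
    intro v
    rw [effL_slice_take]
    refine Finset.mem_Icc.2 ⟨?_, ?_⟩
    · have := hslo (i + min v (j-i))
      linarith
    · have h1 : s (i + min v (j-i)) ≤ ((Pi:ℕ):ℤ) := hall _ (by omega)
      have := hslo i
      linarith
  have hIccsi : (Finset.Icc (-(s i)) ((Pi:ℕ):ℤ)).card ≤ 2 * Pi + 1 := by
    rw [Int.card_Icc]
    have h0 := hslo i
    omega
  obtain ⟨β, hβ, hβeff, hβpre', hβlen⟩ := cut1 (T := T) (Finset.Icc (-(s i)) ((Pi:ℕ):ℤ))
    ((l.drop i).take (j-i)).length ((l.drop i).take (j-i)) q₁ q₁ le_rfl hslice hβpre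
  have hβeff' : effL β = E := by
    rw [hβeff, effL_slice l hij.le]
  have hβlen' : β.length ≤ n * (2 * Pi + 1) :=
    le_trans hβlen (Nat.mul_le_mul_left n hIccsi)
  have hβpeak : ∀ v, effL (β.take v) ≤ ((Pi:ℕ):ℤ) := fun v => (Finset.mem_Icc.1 (hβpre' v)).2
  have hβdrop : ∀ v, -(s i) ≤ effL (β.take v) := fun v => (Finset.mem_Icc.1 (hβpre' v)).1

  -- the high co-record point
  have hW0x : ((W0:ℕ):ℤ) ≤ x := by
    have h0 : (0:ℤ) ≤ ((Pi:ℕ):ℤ) + P + (c:ℤ) * Pi + 2 * P + 10 := by positivity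
    linarith [hxW]
  obtain ⟨t1, hPrt1, ht1le, ht1lt, hgt⟩ : ∃ t1, s t1 ≤ x - W0 ∧ t1 ≤ l.length ∧
      t1 < l.length ∧ ∀ u, t1 < u → u ≤ l.length → ¬ (s u ≤ x - W0) := by
    classical
    set Pr : ℕ → Prop := fun u => s u ≤ x - ((W0:ℕ):ℤ) with hPrdef
    have hPr0 : Pr 0 := by rw [hPrdef]; simp only; rw [hs0]; linarith
    refine ⟨Nat.findGreatest Pr l.length, Nat.findGreatest_spec (Nat.zero_le l.length) hPr0, Nat.findGreatest_le _, ?_, ?_⟩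
    · rcases eq_or_lt_of_le (Nat.findGreatest_le (P := Pr) l.length) with h | h
      · exfalso
        have hsp := Nat.findGreatest_spec (P := Pr) (Nat.zero_le l.length) hPr0
        rw [h] at hsp
        have h2 : s l.length ≤ x - ((W0:ℕ):ℤ) := hsp
        rw [hsend l.length le_rfl] at h2
        have h3 : (0:ℤ) < ((W0:ℕ):ℤ) := by exact_mod_cast (by omega : 0 < W0)
        linarith
      · exact h
    · intro u h1 h2 h3
      exact Nat.findGreatest_is_greatest h1 h2 h3
  obtain ⟨t0, ht0mem, ht0min⟩ := Finset.exists_min_image (Finset.Icc (t1+1) l.length) s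
    ⟨l.length, Finset.mem_Icc.2 ⟨by omega, le_rfl⟩⟩
  have ht0a : t1 + 1 ≤ t0 := (Finset.mem_Icc.1 ht0mem).1
  have ht0b : t0 ≤ l.length := (Finset.mem_Icc.1 ht0mem).2
  have hμlow : x - W0 < s t0 := by
    have := hgt t0 (by omega) ht0b
    linarith [not_le.1 (by exact_mod_cast this)]
  have hμhigh : s t0 ≤ x - W0 + M := by
    have h1 : s t0 ≤ s (t1+1) := ht0min (t1+1) (Finset.mem_Icc.2 ⟨le_rfl, by omega⟩)
    have h2 := hstep t1
    linarith
  have hsuff : ∀ u, t1 + 1 ≤ u → s t0 ≤ s u := by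
    intro u hu
    rcases le_or_gt u l.length with h | h
    · exact ht0min u (Finset.mem_Icc.2 ⟨hu, h⟩)
    · rw [hsend u h.le]
      have : ((M:ℕ):ℤ) ≤ ((W0:ℕ):ℤ) := by
        have : M ≤ W0 := by omega
        exact_mod_cast this
      linarith
  -- construct θ
  set q₂ := endState q₀ (l.take t0) with hq2def
  have hθraw : IsPathFrom T q₂ (l.drop t0) qf := (isPathFrom_split hl t0).2
  have hθpre : ∀ v, effL ((l.drop t0).take v) ∈ Finset.Icc (0:ℤ) (x - s t0) := by
    intro v
    have heq : effL ((l.drop t0).take v) = s (t0 + v) - s t0 := by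
      simp only [hsdef]
      have := effL_take_add l t0 v
      omega
    rw [heq]
    refine Finset.mem_Icc.2 ⟨?_, ?_⟩
    · have := hsuff (t0 + v) (by omega)
      linarith
    · have := hshi (t0 + v)
      linarith
  obtain ⟨θ, hθ, hθeff, hθpre', hθlen⟩ := cut1 (T := T) (Finset.Icc (0:ℤ) (x - s t0))
    (l.drop t0).length (l.drop t0) q₂ qf le_rfl hθraw hθpre
  have hθeff' : effL θ = x - s t0 := by
    rw [hθeff, effL_drop, heff]
  have hθlen' : θ.length ≤ n * W0 := by
    have hcardθ : (Finset.Icc (0:ℤ) (x - s t0)).card ≤ W0 := by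
      rw [Int.card_Icc]
      omega
    exact le_trans hθlen (Nat.mul_le_mul_left n hcardθ)
  have hθdrop : dropL θ = 0 := dropL_eq_zero (fun v => (Finset.mem_Icc.1 (hθpre' v)).1)
  have hθpeak : peakL θ = effL θ := by
    apply peakL_eq_effL
    intro v
    rw [hθeff']
    exact (Finset.mem_Icc.1 (hθpre' v)).2

  -- the middle segment
  have hPiW0 : ((Pi:ℕ):ℤ) + 1 ≤ ((W0:ℕ):ℤ) := by
    have : Pi + 1 ≤ W0 := by omega
    exact_mod_cast this
  have hjt0 : j < t0 := by
    by_contra hcon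
    push_neg at hcon
    have h1 : s t0 ≤ s j := by
      have := hall j le_rfl
      have h2 : x - ((W0:ℕ):ℤ) < s t0 := hμlow
      -- s j ≤ Pi < x - W0 < s t0 would need x - W0 ≥ Pi
      have h3 : ((Pi:ℕ):ℤ) ≤ x - W0 := by
        have h0 : (0:ℤ) ≤ (c:ℤ) * Pi := by positivity
        have h0' : (0:ℤ) ≤ ((P:ℕ):ℤ) := by positivity
        linarith [hxW]
      linarith [ht0min j (Finset.mem_Icc.2 ⟨by omega, hrb3⟩)]
    have h3 : ((Pi:ℕ):ℤ) ≤ x - W0 := by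
      have h0 : (0:ℤ) ≤ (c:ℤ) * Pi := by positivity
      have h0' : (0:ℤ) ≤ ((P:ℕ):ℤ) := by positivity
      linarith [hxW]
    have := hall j le_rfl
    linarith [hμlow]
  have hmidraw : IsPathFrom T q₁ ((l.drop j).take (t0 - j)) q₂ := by
    have h := isPathFrom_slice hl hjt0.le
    rw [hq1j] at h
    exact h
  have hmideff : effL ((l.drop j).take (t0 - j)) = s t0 - s j := effL_slice l hjt0.le
  have hEn1 : 1 ≤ E.toNat := by omega
  obtain ⟨mid, hmid, hmidmod, hmidlen⟩ := cut2 (T := T) E.toNat (by omega)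
    ((l.drop j).take (t0 - j)).length ((l.drop j).take (t0 - j)) q₁ q₂ le_rfl hmidraw
  have hEn : ((E.toNat : ℕ) : ℤ) = E := Int.toNat_of_nonneg (by linarith)
  have hmidlen' : mid.length ≤ Lmid := by
    have h1 : E.toNat ≤ Pi := by omega
    calc mid.length ≤ Fintype.card Q * E.toNat := hmidlen
      _ ≤ n * Pi := Nat.mul_le_mul le_rfl h1
  have hmidpre : ∀ v, |effL (mid.take v)| ≤ ((P:ℕ):ℤ) := by
    intro v
    have h1 := effL_take_abs_le hMbd hmid v
    have h2 : ((mid.length:ℕ):ℤ) * M ≤ ((Lmid:ℕ):ℤ) * M :=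
      mul_le_mul_of_nonneg_right (by exact_mod_cast hmidlen') (by positivity)
    have h3 : ((Lmid:ℕ):ℤ) * M = ((P:ℕ):ℤ) := by push_cast [hPdef]; ring
    linarith
  have hmideffabs : |effL mid| ≤ ((P:ℕ):ℤ) := by
    have := hmidpre mid.length
    rwa [effL_take_of_le mid le_rfl] at this
  -- γ
  set γ := (List.replicate c β).flatten ++ mid with hγdef
  have hγ : IsPathFrom T q₁ γ q₂ :=
    isPathFrom_append (isPathFrom_flatten_replicate hβ c) hmid
  have hγeff : effL γ = (c:ℤ) * E + effL mid := by
    rw [hγdef, effL_append, effL_flatten_replicate, hβeff']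
  have hγlen : γ.length ≤ (c + 1) * (n * (2 * Pi + 1)) + Lmid := by
    rw [hγdef, List.length_append, length_flatten_replicate]
    have h1 : c * β.length ≤ c * (n * (2 * Pi + 1)) := Nat.mul_le_mul le_rfl hβlen'
    have h2 : c * (n * (2 * Pi + 1)) ≤ (c+1) * (n * (2 * Pi + 1)) :=
      Nat.mul_le_mul (Nat.le_succ c) le_rfl
    omega
  -- choose k
  obtain ⟨d, hd⟩ : ((E.toNat : ℕ) : ℤ) ∣ (effL ((l.drop j).take (t0 - j)) - effL mid) :=
    Int.ModEq.dvd hmidmod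
  rw [hmideff, hEn] at hd
  set D : ℤ := s t0 - s i - effL mid - (c:ℤ) * E with hDdef
  have hcE : (c:ℤ) * E ≤ (c:ℤ) * Pi :=
    mul_le_mul_of_nonneg_left hEPi (by positivity)
  have hcEc : (c:ℤ) ≤ (c:ℤ) * E := by
    have := mul_le_mul_of_nonneg_left hE1 (show (0:ℤ) ≤ (c:ℤ) by positivity)
    simpa using this
  have hD0 : 0 ≤ D := by
    rw [hDdef]
    have h1 := abs_le.1 hmideffabs
    linarith [hμlow, hxW, hsi_ub, hcE]
  have hDk : D = E * (d + 1 - c) := by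
    have h1 : s t0 - s j - effL mid = E * d := hd
    have h2 : D = E * d + E - (c:ℤ) * E := by
      rw [hDdef, hEdef]
      rw [hEdef] at h1
      linarith
    rw [h2]; ring
  have hq0 : 0 ≤ d + 1 - c := by
    by_contra hcon
    push_neg at hcon
    have h1 : d + 1 - (c:ℤ) ≤ -1 := by omega
    have h2 : E * (d + 1 - (c:ℤ)) ≤ E * (-1) :=
      mul_le_mul_of_nonneg_left h1 (by linarith) |>.trans_eq (by ring) |>.trans_eq rfl
    rw [← hDk] at h2
    linarith
  set k := (d + 1 - c).toNat with hkdef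
  have hkE : (k:ℤ) * E = D := by
    rw [hkdef, Int.toNat_of_nonneg hq0, hDk]; ring

  -- assemble
  have hcZ : ((c:ℕ):ℤ) = 2 * ((Pi:ℕ):ℤ) + 2 * ((P:ℕ):ℤ) + 1 := by push_cast [hcdef]; ring
  have hW0Z : ((W0:ℕ):ℤ) = ((Pi:ℕ):ℤ) + 2 * ((P:ℕ):ℤ) + ((M:ℕ):ℤ) + 1 := by
    push_cast [hW0def]; ring
  have hwlb : ((Pi:ℕ):ℤ) + 2 * ((P:ℕ):ℤ) + 1 ≤ x - s t0 := by
    linarith [hμhigh]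
  have hcE0 : (0:ℤ) ≤ (c:ℤ) * E := by
    have h0 : (0:ℤ) ≤ (c:ℤ) := by positivity
    linarith [hcEc]
  have hγeff_lb : (c:ℤ) * E - ((P:ℕ):ℤ) ≤ effL γ := by
    rw [hγeff]
    have := abs_le.1 hmideffabs
    linarith
  have hflatbd : ∀ u, effL (((List.replicate c β).flatten).take u) ≤ (c:ℤ) * E + ((Pi:ℕ):ℤ) := by
    have hbd : BdFrom 0 ((c:ℤ) * E + ((Pi:ℕ):ℤ)) ((List.replicate c β).flatten) := by
      apply bdFrom_flatten_replicate
      · have h0 : (0:ℤ) ≤ ((Pi:ℕ):ℤ) := by positivity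
        linarith
      · intro a ha v
        rw [hβeff']
        have h1 := hβpeak v
        have h2 : (a:ℤ) * E ≤ (c:ℤ) * E := by
          apply mul_le_mul_of_nonneg_right _ (by linarith)
          exact_mod_cast ha.le
        linarith
    intro u
    have := hbd u
    linarith
  have hγpeak : ∀ u, effL (γ.take u) ≤ (c:ℤ) * E + ((Pi:ℕ):ℤ) + ((P:ℕ):ℤ) := by
    intro u
    rw [hγdef, effL_take_append]
    have h1 := hflatbd u
    have h2 := abs_le.1 (hmidpre (u - ((List.replicate c β).flatten).length))
    linarith
  refine ⟨q₁, q₂, α, β, γ, θ, k, hα, hβ, hγ, ?_, ?_, ?_, hθ, ?_, hθdrop, hθpeak, ?_, ?_, ?_⟩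
  · -- |α| ≤ B2
    rw [← hn] at hαlen
    omega
  · -- |β| ≤ B2
    have h1 : n * (2 * Pi + 1) ≤ (c+1) * (n * (2 * Pi + 1)) :=
      Nat.le_mul_of_pos_left _ (by omega)
    omega
  · -- |γ| ≤ B2
    omega
  · -- |θ| ≤ B3
    omega
  · -- overshoot condition
    rw [hθeff']
    apply max_le
    · have h1 : peakL γ ≤ (c:ℤ) * E + ((Pi:ℕ):ℤ) + ((P:ℕ):ℤ) := peakL_le hγpeak
      linarith [hγeff_lb, hwlb]
    · have h1 : peakL β ≤ ((Pi:ℕ):ℤ) := peakL_le hβpeak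
      have h2 : (2 * ((Pi:ℕ):ℤ) + 2 * ((P:ℕ):ℤ) + 1) - ((P:ℕ):ℤ) ≤ effL γ := by
        rw [← hcZ]
        linarith [hγeff_lb, hcEc]
      rw [hβeff']
      linarith [hwlb, hE1]
  · -- total effect
    simp only [effL_append, effL_flatten_replicate, hβeff', hαeff', hγeff, hθeff']
    have hDexp : D = s t0 - s i - effL mid - (c:ℤ) * E := hDdef
    linarith [hkE]
  · -- nonnegativity of all prefix sums
    have hkE0 : (0:ℤ) ≤ (k:ℤ) * E := by rw [hkE]; exact hD0
    have hOkα : OkFrom 0 α := by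
      intro v
      have := (Finset.mem_Icc.1 (hαpre' v)).1
      linarith
    have hOkflat : OkFrom (s i) ((List.replicate k β).flatten) := by
      apply okFrom_flatten_replicate (hslo i)
      intro a ha v
      rw [hβeff']
      have h1 := hβdrop v
      have h2 : (0:ℤ) ≤ (a:ℤ) * E := mul_nonneg (by positivity) (by linarith)
      linarith
    have hOkγ : OkFrom (s i + (k:ℤ) * E) γ := by
      rw [hγdef]
      apply okFrom_append
      · apply okFrom_flatten_replicate (by linarith [hslo i])
        intro a ha v
        rw [hβeff']
        have h1 := hβdrop v
        have h2 : (0:ℤ) ≤ (a:ℤ) * E := mul_nonneg (by positivity) (by linarith)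
        linarith
      · have hbase : s i + (k:ℤ) * E + effL ((List.replicate c β).flatten)
            = s t0 - effL mid := by
          rw [effL_flatten_replicate, hβeff', hkE, hDdef]
          ring
        rw [hbase]
        intro v
        have h1 := abs_le.1 (hmidpre v)
        have h2 := abs_le.1 hmideffabs
        linarith [hμlow, hxW]
    have hOkθ : OkFrom (s i + (k:ℤ) * E + effL γ) θ := by
      have hbase : s i + (k:ℤ) * E + effL γ = s t0 := by
        rw [hγeff, hkE, hDdef]; ring
      rw [hbase]
      intro v
      have := (Finset.mem_Icc.1 (hθpre' v)).1
      linarith [hslo t0]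
    intro jj
    have hOk : OkFrom 0 (α ++ ((List.replicate k β).flatten ++ (γ ++ θ))) := by
      apply okFrom_append hOkα
      have hb1 : 0 + effL α = s i := by rw [hαeff']; ring
      rw [hb1]
      apply okFrom_append hOkflat
      have hb2 : s i + effL ((List.replicate k β).flatten) = s i + (k:ℤ) * E := by
        rw [effL_flatten_replicate, hβeff']
      rw [hb2]
      apply okFrom_append hOkγ
      exact hOkθ
    have := hOk jj
    simpa using this






end Main

set_option maxHeartbeats 1000000 in
lemma backward_aux {Q : Type*} [Fintype Q] {T : Finset (Q × ℤ × Q)} {q₀ qf : Q} {M : ℕ}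
    (hMbd : ∀ t ∈ T, |t.2.1| ≤ (M:ℤ)) {B1 B2 B3 : ℕ}
    (hB1 : (2 * B2 + B3 + 1) * M + 1 ≤ B1) (x : ℤ) (hx : (B1:ℤ) ≤ x)
    {q₁ q₂ : Q} {α β γ θ : List (Q × ℤ × Q)} {k : ℕ}
    (hα : IsPathFrom T q₀ α q₁) (hβ : IsPathFrom T q₁ β q₁) (hγ : IsPathFrom T q₁ γ q₂)
    (hlα : α.length ≤ B2) (hlβ : β.length ≤ B2) (hlγ : γ.length ≤ B2)
    (hθ : IsPathFrom T q₂ θ qf) (hlθ : θ.length ≤ B3)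
    (hθdrop : dropL θ = 0) (hθpeak : peakL θ = effL θ)
    (hover : max (peakL γ - effL γ) ((peakL β - effL β) - effL γ) ≤ effL θ)
    (heff : effL (α ++ (List.replicate k β).flatten ++ γ ++ θ) = x)
    (hpos : ∀ j : ℕ, 0 ≤ effL ((α ++ (List.replicate k β).flatten ++ γ ++ θ).take j)) :
    BoxReachConfig T q₀ x qf := by
  have hpath : IsPathFrom T q₀ (α ++ (List.replicate k β).flatten ++ γ ++ θ) qf :=
    isPathFrom_append (isPathFrom_append
      (isPathFrom_append hα (isPathFrom_flatten_replicate hβ k)) hγ) hθ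
  refine ⟨_, hpath, heff, fun j => ⟨hpos j, ?_⟩⟩
  -- bound helpers
  have hMnn : (0:ℤ) ≤ (M:ℕ) := by positivity
  have hboundα : ∀ v, |effL (α.take v)| ≤ (B2:ℤ) * M := by
    intro v
    have h1 := effL_take_abs_le hMbd hα v
    have h2 : ((α.length:ℕ):ℤ) * M ≤ (B2:ℤ) * M :=
      mul_le_mul_of_nonneg_right (by exact_mod_cast hlα) hMnn
    linarith
  have hboundγ : |effL γ| ≤ (B2:ℤ) * M := by
    have h1 := abs_effL_le hMbd hγ
    have h2 : ((γ.length:ℕ):ℤ) * M ≤ (B2:ℤ) * M :=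
      mul_le_mul_of_nonneg_right (by exact_mod_cast hlγ) hMnn
    linarith
  have hboundθ : |effL θ| ≤ (B3:ℤ) * M := by
    have h1 := abs_effL_le hMbd hθ
    have h2 : ((θ.length:ℕ):ℤ) * M ≤ (B3:ℤ) * M :=
      mul_le_mul_of_nonneg_right (by exact_mod_cast hlθ) hMnn
    linarith
  have hboundα' : |effL α| ≤ (B2:ℤ) * M := by
    have := hboundα α.length
    rwa [effL_take_of_le α le_rfl] at this
  have heff' : effL α + (k:ℤ) * effL β + effL γ + effL θ = x := by
    have h := heff
    simp only [effL_append, effL_flatten_replicate] at h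
    linarith
  have hB1' : (2 * (B2:ℤ) + B3 + 1) * M + 1 ≤ x := by
    have : ((2 * B2 + B3 + 1) * M + 1 : ℕ) ≤ (B1:ℕ) := hB1
    have h2 : (((2 * B2 + B3 + 1) * M + 1 : ℕ) : ℤ) ≤ (B1:ℤ) := by exact_mod_cast this
    push_cast at h2
    linarith
  rw [show (2 * (B2:ℤ) + B3 + 1) * M = 2 * ((B2:ℤ) * M) + (B3:ℤ) * M + M from by ring] at hB1'
  have hE : 0 ≤ effL β := by
    by_contra hneg
    push_neg at hneg
    have h1 : (k:ℤ) * effL β ≤ 0 :=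
      mul_nonpos_of_nonneg_of_nonpos (by positivity) hneg.le
    have h2 := abs_le.1 hboundα'
    have h3 := abs_le.1 hboundγ
    have h4 := abs_le.1 hboundθ
    nlinarith [hB1', heff']
  -- the upper bound
  have hnn2 : (0:ℤ) ≤ (B2:ℤ) * M := by positivity
  have hnn3 : (0:ℤ) ≤ (B3:ℤ) * M := by positivity
  have hover1 : peakL γ - effL γ ≤ effL θ := le_trans (le_max_left _ _) hover
  have hover2 : peakL β - effL β - effL γ ≤ effL θ := le_trans (le_max_right _ _) hover
  have hBd : BdFrom 0 x (α ++ ((List.replicate k β).flatten ++ (γ ++ θ))) := by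
    apply bdFrom_append
    · intro v
      have := abs_le.1 (hboundα v)
      linarith [hB1', hnn2, hnn3]
    · have hb1 : (0:ℤ) + effL α = effL α := by ring
      rw [hb1]
      apply bdFrom_append
      · apply bdFrom_flatten_replicate
        · have := abs_le.1 hboundα'
          linarith [hB1', hnn2, hnn3]
        · intro a ha v
          have h1 := effL_take_le_peakL β v
          have h2 : ((a:ℤ) + 1) * effL β ≤ (k:ℤ) * effL β := by
            apply mul_le_mul_of_nonneg_right _ hE
            exact_mod_cast ha
          nlinarith [hover2, heff']
      · have hb2 : effL α + effL ((List.replicate k β).flatten)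
            = effL α + (k:ℤ) * effL β := by rw [effL_flatten_replicate]
        rw [hb2]
        apply bdFrom_append
        · intro v
          have h1 := effL_take_le_peakL γ v
          linarith [hover1, heff']
        · intro v
          have h1 := effL_take_le_peakL θ v
          rw [hθpeak] at h1
          linarith [heff']
  have h := hBd j
  simp only [List.append_assoc]
  simpa using h

set_option maxHeartbeats 2000000 in
/-- Characterization of box-reachability in a 1-VASS by short linear path schemes
`αβ*γ` together with short closing suffixes `θ`, valid above a threshold `B₁`. -/
theorem boxReach_iff_lps_with_closing {Q : Type*} [Fintype Q]
    (T : Finset (Q × ℤ × Q)) (q₀ qf : Q) :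
    ∃ B₁ B₂ B₃ : ℕ, ∀ x : ℕ, B₁ ≤ x →
      (BoxReachConfig T q₀ (x : ℤ) qf ↔
        ∃ (q₁ q₂ : Q) (α β γ θ : List (Q × ℤ × Q)) (k : ℕ),
          -- a linear path scheme αβ*γ starting at q₀, with short components
          IsPathFrom T q₀ α q₁ ∧ IsPathFrom T q₁ β q₁ ∧ IsPathFrom T q₁ γ q₂ ∧
          α.length ≤ B₂ ∧ β.length ≤ B₂ ∧ γ.length ≤ B₂ ∧
          -- a short path θ that closes αβ*γ and ends at qf
          IsPathFrom T q₂ θ qf ∧ θ.length ≤ B₃ ∧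
          dropL θ = 0 ∧ peakL θ = effL θ ∧
          max (peakL γ - effL γ) ((peakL β - effL β) - effL γ) ≤ effL θ ∧
          -- αβᵏγθ is an ℕ-path from (0,q₀) to (x,qf)
          effL (α ++ (List.replicate k β).flatten ++ γ ++ θ) = (x : ℤ) ∧
          (∀ j : ℕ,
            0 ≤ effL ((α ++ (List.replicate k β).flatten ++ γ ++ θ).take j))) := by
  classical
  set M : ℕ := (T.sup fun t => t.2.1.natAbs) + 1 with hMdef
  have hM1 : 1 ≤ M := by omega
  have hMbd : ∀ t ∈ T, |t.2.1| ≤ (M:ℤ) := by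
    intro t ht
    have h1 : t.2.1.natAbs ≤ T.sup (fun t => t.2.1.natAbs) := Finset.le_sup (f := fun t => t.2.1.natAbs) ht
    have h2 : t.2.1.natAbs ≤ M := by omega
    calc |t.2.1| = (t.2.1.natAbs : ℤ) := Int.abs_eq_natAbs _
      _ ≤ (M:ℤ) := by exact_mod_cast h2
  set n := Fintype.card Q with hndef
  set B2 := n * ((n + 1) * M + 1)
      + ((2 * ((n + 1) * M) + 2 * (n * ((n + 1) * M) * M) + 1) + 1)
        * (n * (2 * ((n + 1) * M) + 1))
      + n * ((n + 1) * M) + 1 with hB2def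
  set B3 := n * (((n + 1) * M) + 2 * (n * ((n + 1) * M) * M) + M + 1) + 1 with hB3def
  set FWD := (((n + 1) * M) + 2 * (n * ((n + 1) * M) * M) + M + 1)
      + ((n + 1) * M)
      + (n * ((n + 1) * M) * M)
      + (2 * ((n + 1) * M) + 2 * (n * ((n + 1) * M) * M) + 1) * ((n + 1) * M)
      + 2 * (n * ((n + 1) * M) * M) + 10 with hFWDdef
  refine ⟨(2 * B2 + B3 + 1) * M + 1 + FWD, B2, B3, ?_⟩
  intro x hx
  constructor
  · intro hbr
    apply forward_aux hMbd hM1 (x:ℤ) le_rfl le_rfl ?_ hbr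
    have h1 : FWD ≤ (2 * B2 + B3 + 1) * M + 1 + FWD := Nat.le_add_left _ _
    have h2 : FWD ≤ x := le_trans h1 hx
    exact_mod_cast h2
  · rintro ⟨q₁, q₂, α, β, γ, θ, k, hα, hβ, hγ, h1, h2, h3, hθ, h4, h5, h6, h7, h8, h9⟩
    exact backward_aux hMbd (Nat.le_add_right _ _) (x:ℤ) (by exact_mod_cast hx)
      hα hβ hγ h1 h2 h3 hθ h4 h5 h6 h7 h8 h9
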